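/- Let p ≥ 5 and let s be a natural number with s < (p − 1)/2. Let Ω₁ and Ω₂ be symmetric p×p real matrices, each having at most s nonzero entries in positions (i,j) with i < j. If T(Ω₁) = T(Ω₂), where T(Ω) = ω1ᵀ + 1ωᵀ − 2Ω and ω ∈ ℝ^p is the diagonal vector of Ω, then Ω₁ = Ω₂. -/

import Mathlib

open Matrix Finset

private lemma quad_bound (a b : ℕ) (hab : 5 ≤ a + b) :
    2 * (a + b) ≤ a * (a - 1) + b * (b - 1) + 2 := by
  rcases le_or_gt a 2 with ha | ha
  · obtain ⟨c, rfl⟩ : ∃ c, b = c + 3 := ⟨b - 3, by omega⟩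
    have hb1 : c + 3 - 1 = c + 2 := by omega
    rw [hb1]
    interval_cases a <;> nlinarith [sq_nonneg c]
  · rcases le_or_gt b 2 with hb | hb
    · obtain ⟨c, rfl⟩ : ∃ c, a = c + 3 := ⟨a - 3, by omega⟩
      have ha1 : c + 3 - 1 = c + 2 := by omega
      rw [ha1]
      interval_cases b <;> nlinarith [sq_nonneg c]
    · have h1 : 2 * a ≤ a * (a - 1) := by
        have h2 : 2 ≤ a - 1 := by omega
        calc 2 * a = a * 2 := by ring
          _ ≤ a * (a - 1) := Nat.mul_le_mul_left a h2
      have h3 : 2 * b ≤ b * (b - 1) := by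
        have h4 : 2 ≤ b - 1 := by omega
        calc 2 * b = b * 2 := by ring
          _ ≤ b * (b - 1) := Nat.mul_le_mul_left b h4
      omega

private lemma cross_bound {p : ℕ} (d : Fin p → ℝ) (A B : Finset (Fin p)) (hAB : Disjoint A B)
    (h : ∀ i ∈ A, ∀ j ∈ B, d i + d j ≠ 0) :
    A.card * B.card ≤
      (Finset.univ.filter (fun ij : Fin p × Fin p => ij.1 < ij.2 ∧ d ij.1 + d ij.2 ≠ 0)).card := by
  classical
  rw [← Finset.card_product]
  apply Finset.card_le_card_of_injOn (fun ij => if ij.1 < ij.2 then ij else (ij.2, ij.1))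
  · rintro ⟨i, j⟩ hij
    rw [Finset.mem_coe, Finset.mem_product] at hij
    have hne : i ≠ j := fun h' => (Finset.disjoint_left.mp hAB hij.1) (h' ▸ hij.2)
    by_cases hlt : i < j
    · simp only [if_pos hlt, Finset.mem_coe, Finset.mem_filter]
      exact ⟨Finset.mem_univ _, hlt, h i hij.1 j hij.2⟩
    · have hlt' : j < i := lt_of_le_of_ne (not_lt.mp hlt) (Ne.symm hne)
      simp only [if_neg hlt, Finset.mem_coe, Finset.mem_filter]
      refine ⟨Finset.mem_univ _, hlt', ?_⟩
      rw [add_comm]; exact h i hij.1 j hij.2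
  · rintro ⟨i, j⟩ hij ⟨i', j'⟩ hij' heq
    simp only [Finset.coe_product, Set.mem_prod, Finset.mem_coe] at hij hij'
    dsimp only at heq
    by_cases ha : i < j <;> by_cases hb : i' < j'
    · rw [if_pos ha, if_pos hb] at heq
      exact heq
    · rw [if_pos ha, if_neg hb, Prod.mk.injEq] at heq
      obtain ⟨hx, hy⟩ := heq
      exfalso
      rw [hx] at hij
      exact (Finset.disjoint_left.mp hAB hij.1) hij'.2
    · rw [if_neg ha, if_pos hb, Prod.mk.injEq] at heq
      obtain ⟨hx, hy⟩ := heq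
      exfalso
      rw [hy] at hij
      exact (Finset.disjoint_left.mp hAB hij.1) hij'.2
    · rw [if_neg ha, if_neg hb, Prod.mk.injEq] at heq
      obtain ⟨hx, hy⟩ := heq
      exact Prod.ext hy hx
  
private lemma within_bound {p : ℕ} (d : Fin p → ℝ) (A : Finset (Fin p))
    (h : ∀ i ∈ A, ∀ j ∈ A, d i + d j ≠ 0) :
    A.card * (A.card - 1) ≤ 2 * (Finset.univ.filter (fun ij : Fin p × Fin p =>
      ij.1 < ij.2 ∧ ij.1 ∈ A ∧ ij.2 ∈ A ∧ d ij.1 + d ij.2 ≠ 0)).card := by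
  classical
  have hcard : A.offDiag.card = A.card * (A.card - 1) := by
    rw [Finset.offDiag_card]
    cases hA : A.card with
    | zero => rfl
    | succ n => rw [Nat.succ_sub_one, Nat.mul_succ, Nat.add_sub_cancel]
  rw [← hcard]
  apply Finset.card_le_mul_card_image_of_maps_to
    (f := fun ij : Fin p × Fin p => if ij.1 < ij.2 then ij else (ij.2, ij.1))
  · rintro ⟨i, j⟩ hij
    rw [Finset.mem_offDiag] at hij
    obtain ⟨hiA, hjA, hne⟩ := hij
    by_cases hlt : i < j
    · simp only [if_pos hlt, Finset.mem_filter]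
      exact ⟨Finset.mem_univ _, hlt, hiA, hjA, h i hiA j hjA⟩
    · have hlt' : j < i := lt_of_le_of_ne (not_lt.mp hlt) (Ne.symm hne)
      simp only [if_neg hlt, Finset.mem_filter]
      exact ⟨Finset.mem_univ _, hlt', hjA, hiA, h j hjA i hiA⟩
  · rintro ⟨x, y⟩ hxy
    have hsub : (A.offDiag.filter (fun ij : Fin p × Fin p =>
        (if ij.1 < ij.2 then ij else (ij.2, ij.1)) = (x, y))) ⊆ {(x, y), (y, x)} := by
      rintro ⟨i, j⟩ hm
      rw [Finset.mem_filter] at hm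
      by_cases hlt : i < j
      · rw [if_pos hlt] at hm
        simp [hm.2]
      · have hm2 := hm.2
        rw [if_neg hlt, Prod.mk.injEq] at hm2
        obtain ⟨hx, hy⟩ := hm2
        simp only [Finset.mem_insert, Finset.mem_singleton, Prod.mk.injEq]
        right
        exact ⟨hy, hx⟩
    calc (A.offDiag.filter _).card ≤ ({(x, y), (y, x)} : Finset (Fin p × Fin p)).card :=
          Finset.card_le_card hsub
      _ ≤ 2 := Finset.card_le_two

private lemma pairs_bound {p : ℕ} (hp : 5 ≤ p) (d : Fin p → ℝ) (i₀ : Fin p) (hd : d i₀ ≠ 0) :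
    p - 1 ≤ (Finset.univ.filter (fun ij : Fin p × Fin p =>
      ij.1 < ij.2 ∧ d ij.1 + d ij.2 ≠ 0)).card := by
  classical
  set ND := Finset.univ.filter (fun ij : Fin p × Fin p =>
      ij.1 < ij.2 ∧ d ij.1 + d ij.2 ≠ 0) with hND
  set S := Finset.univ.filter (fun i => d i ≠ 0) with hS
  by_cases hSu : S = Finset.univ
  · -- all diagonal differences nonzero; split by sign
    have hall : ∀ i, d i ≠ 0 := by
      intro i
      have : i ∈ S := hSu ▸ Finset.mem_univ i
      exact (Finset.mem_filter.mp this).2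
    set P := Finset.univ.filter (fun i => 0 < d i) with hP
    set N := Finset.univ.filter (fun i => d i < 0) with hN
    have hdisj : Disjoint P N := by
      rw [Finset.disjoint_left]
      intro i hiP hiN
      rw [hP, Finset.mem_filter] at hiP
      rw [hN, Finset.mem_filter] at hiN
      linarith [hiP.2, hiN.2]
    have hunion : P ∪ N = Finset.univ := by
      ext i
      simp only [Finset.mem_union, hP, hN, Finset.mem_filter, Finset.mem_univ, true_and,
        iff_true]
      rcases (hall i).lt_or_gt with h | h
      · exact Or.inr h
      · exact Or.inl h
    have hcardPN : P.card + N.card = p := by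
      rw [← Finset.card_union_of_disjoint hdisj, hunion, Finset.card_univ, Fintype.card_fin]
    have hTP := within_bound d P (by
      intro i hi j hj
      rw [hP, Finset.mem_filter] at hi hj
      exact ne_of_gt (by linarith [hi.2, hj.2]))
    have hTN := within_bound d N (by
      intro i hi j hj
      rw [hN, Finset.mem_filter] at hi hj
      have : d i + d j < 0 := by linarith [hi.2, hj.2]
      exact ne_of_lt this)
    set TP := Finset.univ.filter (fun ij : Fin p × Fin p =>
      ij.1 < ij.2 ∧ ij.1 ∈ P ∧ ij.2 ∈ P ∧ d ij.1 + d ij.2 ≠ 0) with hTPdef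
    set TN := Finset.univ.filter (fun ij : Fin p × Fin p =>
      ij.1 < ij.2 ∧ ij.1 ∈ N ∧ ij.2 ∈ N ∧ d ij.1 + d ij.2 ≠ 0) with hTNdef
    have hTdisj : Disjoint TP TN := by
      rw [Finset.disjoint_left]
      rintro ⟨i, j⟩ hiP hiN
      rw [hTPdef, Finset.mem_filter] at hiP
      rw [hTNdef, Finset.mem_filter] at hiN
      exact (Finset.disjoint_left.mp hdisj hiP.2.2.1) hiN.2.2.1
    have hTsub : TP ∪ TN ⊆ ND := by
      rintro ⟨i, j⟩ hm
      rw [Finset.mem_union] at hm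
      rw [hND, Finset.mem_filter]
      rcases hm with hm | hm
      · rw [hTPdef, Finset.mem_filter] at hm
        exact ⟨Finset.mem_univ _, hm.2.1, hm.2.2.2.2⟩
      · rw [hTNdef, Finset.mem_filter] at hm
        exact ⟨Finset.mem_univ _, hm.2.1, hm.2.2.2.2⟩
    have hsum : TP.card + TN.card ≤ ND.card := by
      rw [← Finset.card_union_of_disjoint hTdisj]
      exact Finset.card_le_card hTsub
    have hq := quad_bound P.card N.card (by omega)
    omega
  · -- some d i = 0 : use cross pairs between S and Sᶜ
    have hS1 : 1 ≤ S.card := Finset.card_pos.mpr ⟨i₀, Finset.mem_filter.mpr ⟨Finset.mem_univ _, hd⟩⟩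
    have hSlt : S.card < p := by
      have := Finset.card_lt_card (Finset.ssubset_univ_iff.mpr hSu)
      rwa [Finset.card_univ, Fintype.card_fin] at this
    have hcross := cross_bound d S Sᶜ disjoint_compl_right (by
      intro i hi j hj
      rw [hS, Finset.mem_filter] at hi
      have hj0 : d j = 0 := by
        rw [Finset.mem_compl, hS, Finset.mem_filter] at hj
        by_contra h'
        exact hj ⟨Finset.mem_univ _, h'⟩
      rw [hj0, add_zero]
      exact hi.2)
    have hScompl : Sᶜ.card = p - S.card := by
      rw [Finset.card_compl, Fintype.card_fin]
    rw [hScompl, ← hND] at hcross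
    set k := S.card
    set m := p - k with hm
    have hm1 : 1 ≤ m := by omega
    have he : k * m = k * (m - 1) + k := by
      have : m - 1 + 1 = m := by omega
      calc k * m = k * (m - 1 + 1) := by rw [this]
        _ = k * (m - 1) + k := by ring
    have hle : m - 1 ≤ k * (m - 1) := Nat.le_mul_of_pos_left _ (by omega)
    omega

/-- Sufficiency direction of Proposition 2: if `s < (p−1)/2`, two symmetric matrices with
at most `s` nonzero strictly upper-triangular entries and equal variation matrices
`T(Ω) = ω1ᵀ + 1ωᵀ − 2Ω` must coincide. -/
theorem variation_matrix_identifiability (p : ℕ) (hp : 5 ≤ p) (s : ℕ)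
    (hs : (s : ℝ) < ((p : ℝ) - 1) / 2)
    (Ω₁ Ω₂ : Matrix (Fin p) (Fin p) ℝ) (h1 : Ω₁.IsSymm) (h2 : Ω₂.IsSymm)
    (hs1 : {ij : Fin p × Fin p | ij.1 < ij.2 ∧ Ω₁ ij.1 ij.2 ≠ 0}.ncard ≤ s)
    (hs2 : {ij : Fin p × Fin p | ij.1 < ij.2 ∧ Ω₂ ij.1 ij.2 ≠ 0}.ncard ≤ s)
    (hT : ∀ i j, Ω₁ i i + Ω₁ j j - 2 * Ω₁ i j = Ω₂ i i + Ω₂ j j - 2 * Ω₂ i j) :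
    Ω₁ = Ω₂ := by
  classical
  obtain ⟨d, hdef⟩ : ∃ d : Fin p → ℝ, ∀ i, d i = Ω₁ i i - Ω₂ i i :=
    ⟨fun i => Ω₁ i i - Ω₂ i i, fun _ => rfl⟩
  have hij : ∀ i j, Ω₁ i j - Ω₂ i j = (d i + d j) / 2 := by
    intro i j
    have := hT i j
    rw [hdef, hdef]
    linarith
  -- convert ncard hypotheses to Finset card
  have e1 : {ij : Fin p × Fin p | ij.1 < ij.2 ∧ Ω₁ ij.1 ij.2 ≠ 0}.ncard =
      (Finset.univ.filter (fun ij : Fin p × Fin p => ij.1 < ij.2 ∧ Ω₁ ij.1 ij.2 ≠ 0)).card := by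
    rw [Set.ncard_eq_toFinset_card']
    congr 1
    ext ij
    simp [Set.mem_toFinset]
  have e2 : {ij : Fin p × Fin p | ij.1 < ij.2 ∧ Ω₂ ij.1 ij.2 ≠ 0}.ncard =
      (Finset.univ.filter (fun ij : Fin p × Fin p => ij.1 < ij.2 ∧ Ω₂ ij.1 ij.2 ≠ 0)).card := by
    rw [Set.ncard_eq_toFinset_card']
    congr 1
    ext ij
    simp [Set.mem_toFinset]
  have h2s : 2 * s + 2 ≤ p := by
    have hcast : ((2 * s : ℕ) : ℝ) < ((p - 1 : ℕ) : ℝ) := by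
      push_cast [Nat.cast_sub (by omega : 1 ≤ p)]
      linarith
    have := Nat.cast_lt.mp hcast
    omega
  have hd0 : ∀ i, d i = 0 := by
    by_contra hcon
    push_neg at hcon
    obtain ⟨i₀, hi₀⟩ := hcon
    have hb := pairs_bound hp d i₀ hi₀
    have hsub : (Finset.univ.filter (fun ij : Fin p × Fin p =>
        ij.1 < ij.2 ∧ d ij.1 + d ij.2 ≠ 0)) ⊆
        (Finset.univ.filter (fun ij : Fin p × Fin p => ij.1 < ij.2 ∧ Ω₁ ij.1 ij.2 ≠ 0)) ∪
        (Finset.univ.filter (fun ij : Fin p × Fin p => ij.1 < ij.2 ∧ Ω₂ ij.1 ij.2 ≠ 0)) := by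
      rintro ⟨i, j⟩ hm
      rw [Finset.mem_filter] at hm
      obtain ⟨-, hlt, hne⟩ := hm
      dsimp only at hlt hne
      rw [Finset.mem_union]
      by_cases hz : Ω₁ i j = 0
      · right
        rw [Finset.mem_filter]
        refine ⟨Finset.mem_univ _, hlt, ?_⟩
        intro hz2
        have := hij i j
        rw [hz, hz2] at this
        exact hne (by linarith)
      · left
        exact Finset.mem_filter.mpr ⟨Finset.mem_univ _, hlt, hz⟩
    have hcard := Finset.card_le_card hsub
    have hcard2 := Finset.card_union_le
      (Finset.univ.filter (fun ij : Fin p × Fin p => ij.1 < ij.2 ∧ Ω₁ ij.1 ij.2 ≠ 0))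
      (Finset.univ.filter (fun ij : Fin p × Fin p => ij.1 < ij.2 ∧ Ω₂ ij.1 ij.2 ≠ 0))
    rw [e1] at hs1
    rw [e2] at hs2
    omega
  ext i j
  have := hij i j
  rw [hd0 i, hd0 j] at this
  simp at this
  linarith
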